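/- arXiv:0909.2822 — 6 statements merged into one kernel-verified Lean document; each statement's English description precedes it below -/
import Mathlib

section
/- For every real x, lim_{α→∞} (1 + (2/α)^{1/2} x)^α · e^{-(2α)^{1/2} x} = e^{-x²}, the limit taken over α with 1 + (2/α)^{1/2} x > 0. -/
open Filter Real Topology

lemma logbound (x : ℝ) :
    Tendsto (fun t : ℝ => 2 * (Real.log (1 + t * x) - t * x) / t ^ 2) (𝓝[>] (0:ℝ))
      (𝓝 (-x ^ 2)) := by
  have h0 : Tendsto (fun t : ℝ => 2 * (Real.log (1 + t * x) - t * x) / t ^ 2 + x ^ 2)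
      (𝓝[>] (0:ℝ)) (𝓝 0) := by
    rw [tendsto_zero_iff_abs_tendsto_zero]
    apply squeeze_zero' (g := fun t : ℝ => 2 * |x| ^ 3 * t / (1 - t * |x|))
    · exact Eventually.of_forall fun t => abs_nonneg _
    · have hmem : Set.Ioo (0:ℝ) (1 / (|x| + 1)) ∈ 𝓝[>] (0:ℝ) := by
        apply Ioo_mem_nhdsGT_of_mem
        constructor
        · rfl
        · positivity
      filter_upwards [hmem] with t ht
      obtain ⟨ht0, ht1⟩ := ht
      have hx1 : 0 ≤ |x| := abs_nonneg x
      have htx : |t * x| < 1 := by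
        rw [abs_mul, abs_of_pos ht0]
        calc t * |x| ≤ t * (|x| + 1) := by nlinarith
          _ < 1 := by
            rw [← lt_div_iff₀ (by positivity)]
            exact ht1
      have key := Real.abs_log_sub_add_sum_range_le (x := -(t * x)) (by rwa [abs_neg]) 2
      simp only [Finset.sum_range_succ, Finset.sum_range_zero, abs_neg] at key
      norm_num at key
      have habs : |t * x| = t * |x| := by rw [abs_mul, abs_of_pos ht0]
      have heq : 2 * (Real.log (1 + t * x) - t * x) / t ^ 2 + x ^ 2
          = (2 / t ^ 2) * (-(t * x) + (t * x) ^ 2 / 2 + Real.log (1 + t * x)) := by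
        field_simp
        ring
      show |2 * (Real.log (1 + t * x) - t * x) / t ^ 2 + x ^ 2| ≤ _
      rw [heq, abs_mul, abs_of_pos (by positivity : (0:ℝ) < 2 / t ^ 2)]
      calc 2 / t ^ 2 * |(-(t * x) + (t * x) ^ 2 / 2 + Real.log (1 + t * x))|
          ≤ 2 / t ^ 2 * (|t * x| ^ 3 / (1 - |t * x|)) := by
            exact mul_le_mul_of_nonneg_left (by rw [abs_mul]; exact key) (by positivity)
        _ = 2 * |x| ^ 3 * t / (1 - t * |x|) := by
            rw [habs]
            have h3 : (t * |x|) ^ 3 = t ^ 3 * |x| ^ 3 := by ring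
            rw [h3]
            have h1x : (0:ℝ) < 1 - t * |x| := by rw [habs] at htx; linarith
            field_simp
    · have hcont : ContinuousAt (fun t : ℝ => 2 * |x| ^ 3 * t / (1 - t * |x|)) 0 := by
        apply ContinuousAt.div (by fun_prop) (by fun_prop)
        norm_num
      have := hcont.tendsto
      simp only [mul_zero, zero_mul, sub_zero, div_one] at this
      exact this.mono_left nhdsWithin_le_nhds
  have := h0.sub_const (x ^ 2)
  simpa using this

theorem stmt2 (x : ℝ) :
    Tendsto (fun α : ℝ => (1 + Real.sqrt (2 / α) * x) ^ α * Real.exp (-(Real.sqrt (2 * α) * x)))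
      (atTop ⊓ 𝓟 {α : ℝ | 0 < α ∧ 0 < 1 + Real.sqrt (2 / α) * x})
      (nhds (Real.exp (-x ^ 2))) := by
  set L := atTop ⊓ 𝓟 {α : ℝ | 0 < α ∧ 0 < 1 + Real.sqrt (2 / α) * x} with hL
  have hmem : ∀ᶠ α in L, 0 < α ∧ 0 < 1 + Real.sqrt (2 / α) * x := by
    rw [hL, eventually_inf_principal]
    exact Eventually.of_forall fun α h => h
  have hB : Tendsto (fun α : ℝ => Real.sqrt (2 / α)) L (𝓝[>] (0:ℝ)) := by
    rw [tendsto_nhdsWithin_iff]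
    constructor
    · have h1 : Tendsto (fun α : ℝ => 2 / α) atTop (𝓝 0) := tendsto_const_nhds.div_atTop tendsto_id
      have h2 : Tendsto (fun α : ℝ => Real.sqrt (2 / α)) atTop (𝓝 0) :=
        Real.sqrt_zero ▸ ((Real.continuous_sqrt.tendsto 0).comp h1)
      exact h2.mono_left inf_le_left
    · filter_upwards [hmem] with α hα
      obtain ⟨hα0, _⟩ := hα
      exact Real.sqrt_pos.2 (by positivity)
  have hcomp : Tendsto (fun α : ℝ => 2 * (Real.log (1 + Real.sqrt (2 / α) * x) - Real.sqrt (2 / α) * x) / Real.sqrt (2 / α) ^ 2) L (𝓝 (-x ^ 2)) :=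
    (logbound x).comp hB
  have hexp : Tendsto (fun α : ℝ => Real.exp (2 * (Real.log (1 + Real.sqrt (2 / α) * x) - Real.sqrt (2 / α) * x) / Real.sqrt (2 / α) ^ 2)) L (𝓝 (Real.exp (-x ^ 2))) :=
    (Real.continuous_exp.tendsto _).comp hcomp
  apply hexp.congr'
  filter_upwards [hmem] with α hα
  obtain ⟨hα0, hα1⟩ := hα
  have ht : Real.sqrt (2 / α) ^ 2 = 2 / α := Real.sq_sqrt (by positivity)
  have ht0 : 0 < Real.sqrt (2 / α) := Real.sqrt_pos.2 (by positivity)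
  have hs : Real.sqrt (2 * α) = 2 / Real.sqrt (2 / α) := by
    rw [eq_div_iff ht0.ne', ← Real.sqrt_mul (by positivity)]
    rw [show 2 * α * (2 / α) = 4 by field_simp; ring]
    rw [show (4:ℝ) = 2^2 by norm_num, Real.sqrt_sq (by norm_num)]
  have hst : Real.sqrt (2 / α) ≠ 0 := ht0.ne'
  have h2s : 2 / Real.sqrt (2 / α) = Real.sqrt (2 / α) * α := by
    rw [eq_comm, eq_div_iff hst]
    have : Real.sqrt (2 / α) * α * Real.sqrt (2 / α) = Real.sqrt (2 / α) ^ 2 * α := by ring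
    rw [this, ht]
    field_simp
  rw [Real.rpow_def_of_pos hα1, ← Real.exp_add]
  congr 1
  rw [hs, h2s, ht, div_div_eq_mul_div]
  ring
end

section
/- For all real x with -（α/2)^{1/2} < x ≤ 0 and α > 0, one has (1 + (2/α)^{1/2} x)^α e^{-(2α)^{1/2} x} ≤ e^{-x²}. -/
open Real

lemma key_log_ineq (t : ℝ) (h1 : -1 < t) (h2 : t ≤ 0) :
    Real.log (1 + t) ≤ t - t ^ 2 / 2 := by
  set f : ℝ → ℝ := fun s => s - s ^ 2 / 2 - Real.log (1 + s) with hf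
  have hderiv : ∀ s ∈ Set.Ioo (-1 : ℝ) 0, HasDerivAt f (1 - s - 1 / (1 + s)) s := by
    intro s hs
    have hs1 : (1 : ℝ) + s ≠ 0 := by nlinarith [hs.1]
    have h1 : HasDerivAt (fun s : ℝ => s - s ^ 2 / 2) (1 - s) s := by
      have := ((hasDerivAt_id s).sub (((hasDerivAt_pow 2 s).div_const 2)))
      exact this.congr_deriv (by norm_num)
    have h2 : HasDerivAt (fun s : ℝ => Real.log (1 + s)) (1 / (1 + s)) s := by
      have hl : HasDerivAt Real.log (1 / (1 + s)) (1 + s) := by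
        simpa [one_div] using Real.hasDerivAt_log hs1
      have hc : HasDerivAt (fun s : ℝ => 1 + s) 1 s := by
        simpa using (hasDerivAt_id s).const_add 1
      exact (hl.comp s hc).congr_deriv (mul_one _)
    exact h1.sub h2
  have hcont : ContinuousOn f (Set.Ioc (-1 : ℝ) 0) := by
    apply ContinuousOn.sub
    · fun_prop
    · apply ContinuousOn.log (by fun_prop)
      intro s hs
      nlinarith [hs.1]
  have hanti : AntitoneOn f (Set.Ioc (-1 : ℝ) 0) := by
    apply antitoneOn_of_deriv_nonpos (convex_Ioc _ _) hcont
    · intro s hs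
      rw [interior_Ioc] at hs
      exact (hderiv s hs).differentiableAt.differentiableWithinAt
    · intro s hs
      rw [interior_Ioc] at hs
      rw [(hderiv s hs).deriv]
      have hs1 : (0 : ℝ) < 1 + s := by linarith [hs.1]
      rw [sub_nonpos, ← sub_nonneg]
      have : 1 / (1 + s) - (1 - s) = s ^ 2 / (1 + s) := by field_simp; ring
      rw [this]
      positivity
  have ht : t ∈ Set.Ioc (-1 : ℝ) 0 := ⟨h1, h2⟩
  have h0 : (0 : ℝ) ∈ Set.Ioc (-1 : ℝ) 0 := ⟨by norm_num, le_refl _⟩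
  have := hanti ht h0 h2
  simp [f] at this
  linarith

theorem stmt5 (α x : ℝ) (hα : 0 < α) (hx1 : -Real.sqrt (α / 2) < x) (hx2 : x ≤ 0) :
    (1 + Real.sqrt (2 / α) * x) ^ α * Real.exp (-(Real.sqrt (2 * α) * x)) ≤
      Real.exp (-x ^ 2) := by
  set t : ℝ := Real.sqrt (2 / α) * x with htdef
  have hsq : Real.sqrt (2 / α) ^ 2 = 2 / α := Real.sq_sqrt (by positivity)
  have ht0 : t ≤ 0 := mul_nonpos_of_nonneg_of_nonpos (Real.sqrt_nonneg _) hx2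
  have hprod : Real.sqrt (2 / α) * Real.sqrt (α / 2) = 1 := by
    rw [← Real.sqrt_mul (by positivity)]
    rw [show (2 / α) * (α / 2) = 1 by field_simp]
    exact Real.sqrt_one
  have ht1 : -1 < t := by
    have h := mul_lt_mul_of_pos_left hx1 (show 0 < Real.sqrt (2 / α) by
      apply Real.sqrt_pos.mpr; positivity)
    rw [mul_neg, hprod] at h
    exact h
  have h1t : (0 : ℝ) < 1 + t := by linarith
  have hlog := key_log_ineq t ht1 ht0
  have hx2eq : x ^ 2 = α * t ^ 2 / 2 := by
    rw [htdef, mul_pow, hsq]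
    field_simp
  have hsqrt2a : Real.sqrt (2 * α) * x = α * t := by
    rw [htdef]
    rw [show Real.sqrt (2 * α) = α * Real.sqrt (2 / α) by
      rw [← Real.sqrt_sq hα.le, ← Real.sqrt_mul (by positivity)]
      congr 1
      field_simp
      ring
      exact Real.sq_sqrt (by positivity)]
    ring
  rw [Real.rpow_def_of_pos h1t, hsqrt2a, hx2eq, ← Real.exp_add, Real.exp_le_exp]
  nlinarith [mul_le_mul_of_nonneg_left hlog hα.le]
end

section
/- For all x ≥ 0 and α ≥ 1/2, one has (1 + (2/α)^{1/2} x)^α e^{-(2α)^{1/2} x} ≤ (1 + 2x) e^{-x}. -/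
open Real Set

lemma two_log_le (v : ℝ) (hv : 1 ≤ v) : 2 * Real.log v ≤ v - 1/v := by
  have hv0 : 0 < v := lt_of_lt_of_le one_pos hv
  have hw : 0 ≤ Real.log v := Real.log_nonneg hv
  have hs : Real.log v ≤ Real.sinh (Real.log v) := Real.self_le_sinh_iff.2 hw
  rw [Real.sinh_eq, Real.exp_log hv0, Real.exp_neg, Real.exp_log hv0] at hs
  have : v⁻¹ = 1/v := by ring
  linarith [hs]

lemma key (u : ℝ) (hu : 0 ≤ u) : 2 * Real.log (1+u) ≤ u + u/(1+u) := by
  set v := Real.sqrt (1+u) with hvdef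
  have hv1 : 1 ≤ v := by
    have : Real.sqrt 1 ≤ v := Real.sqrt_le_sqrt (by linarith)
    simpa using this
  have hv0 : 0 < v := lt_of_lt_of_le one_pos hv1
  have hv2 : v^2 = 1 + u := Real.sq_sqrt (by linarith)
  have hlog : Real.log (1+u) = 2 * Real.log v := by
    rw [← hv2, Real.log_pow]; push_cast; ring
  have h1 : 2 * Real.log v ≤ v - 1/v := two_log_le v hv1
  rw [hlog]
  have hu' : u = v^2 - 1 := by linarith
  have h2 : 2 * (v - 1/v) ≤ u + u/(1+u) := by
    rw [hu']
    have h3 : 1 + (v^2 - 1) = v^2 := by ring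
    rw [h3]
    have h4 : (0:ℝ) < v^2 := by positivity
    have key2 : (v^2 - 1 + (v^2 - 1)/v^2 - 2*(v - 1/v)) * v^2 = (v^2-1)*(v-1)^2 := by
      field_simp; ring
    nlinarith [sq_nonneg (v-1), mul_nonneg (by nlinarith : (0:ℝ) ≤ v^2-1) (sq_nonneg (v-1))]
  linarith

lemma gderiv (x β : ℝ) (hx : 0 ≤ x) (hβ : 0 < β) :
    HasDerivAt (fun b => b*x - b^2/2 * Real.log (1 + 2*x/b))
      (x - β * Real.log (1 + 2*x/β) + x/(1 + 2*x/β)) β := by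
  have hinner : (0:ℝ) < 1 + 2*x/β := by positivity
  have h1 : HasDerivAt (fun b : ℝ => b*x) x β := by
    simpa using (hasDerivAt_id β).mul_const x
  have hinv : HasDerivAt (fun b : ℝ => 1 + 2*x/b) (2*x * (-(β^2)⁻¹)) β := by
    have := ((hasDerivAt_inv (ne_of_gt hβ)).const_mul (2*x)).const_add 1
    simpa [div_eq_mul_inv] using this
  have hlog : HasDerivAt (fun b : ℝ => Real.log (1 + 2*x/b))
      (2*x * (-(β^2)⁻¹) / (1 + 2*x/β)) β := hinv.log (ne_of_gt hinner)
  have hquad : HasDerivAt (fun b : ℝ => b^2/2) β β := by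
    simpa using (hasDerivAt_pow 2 β).div_const 2
  have : HasDerivAt (fun b => b*x - b^2/2 * Real.log (1 + 2*x/b)) _ β := h1.sub (hquad.mul hlog)
  convert this using 1
  have hβ' : β ≠ 0 := ne_of_gt hβ
  have hinner' : (1 + 2*x/β) ≠ 0 := ne_of_gt hinner
  field_simp
  ring

lemma gmono (x : ℝ) (hx : 0 ≤ x) :
    MonotoneOn (fun b => b*x - b^2/2 * Real.log (1 + 2*x/b)) (Ici 1) := by
  apply monotoneOn_of_deriv_nonneg (convex_Ici 1)
  · apply ContinuousOn.sub (continuousOn_id.mul continuousOn_const)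
    apply ContinuousOn.mul ((continuousOn_pow 2).div_const 2)
    apply ContinuousOn.log
    · apply ContinuousOn.add continuousOn_const
      exact continuousOn_const.div continuousOn_id (fun b hb => by
        have : (1:ℝ) ≤ b := hb; positivity)
    · intro b hb
      have hb1 : (1:ℝ) ≤ b := hb
      have : (0:ℝ) < 1 + 2*x/b := by positivity
      exact ne_of_gt this
  · intro b hb
    rw [interior_Ici] at hb
    have hb0 : 0 < b := lt_trans one_pos hb
    exact (gderiv x b hx hb0).differentiableAt.differentiableWithinAt
  · intro b hb
    rw [interior_Ici] at hb
    have hb0 : 0 < b := lt_trans one_pos hb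
    rw [(gderiv x b hx hb0).deriv]
    set u := 2*x/b with hud
    have hu0 : 0 ≤ u := by positivity
    have hxu : x = b*u/2 := by rw [hud]; field_simp
    have hkey := key u hu0
    have hinner : (0:ℝ) < 1 + u := by linarith
    rw [hxu]
    have expand : b*u/2 - b * Real.log (1+u) + (b*u/2)/(1+u)
        = (b/2) * ((u + u/(1+u)) - 2 * Real.log (1+u)) := by
      field_simp
      ring
    rw [expand]
    apply mul_nonneg (by linarith)
    linarith

theorem stmt6 (α x : ℝ) (hα : (1 : ℝ) / 2 ≤ α) (hx : 0 ≤ x) :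
    (1 + Real.sqrt (2 / α) * x) ^ α * Real.exp (-(Real.sqrt (2 * α) * x)) ≤
      (1 + 2 * x) * Real.exp (-x) := by
  have hα0 : 0 < α := by linarith
  set β := Real.sqrt (2*α) with hβd
  have hβ1 : 1 ≤ β := by
    rw [hβd, show (1:ℝ) = Real.sqrt 1 by simp]
    exact Real.sqrt_le_sqrt (by linarith)
  have hβ0 : 0 < β := lt_of_lt_of_le one_pos hβ1
  have hβ2 : β^2 = 2*α := Real.sq_sqrt (by linarith)
  have hs : Real.sqrt (2/α) = 2/β := by
    rw [show 2/α = (2/β)^2 by rw [div_pow, hβ2]; field_simp]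
    exact Real.sqrt_sq (by positivity)
  rw [hs]
  have hbase : (0:ℝ) < 1 + 2/β*x := by positivity
  have hb2 : (0:ℝ) < 1 + 2*x := by linarith
  rw [Real.rpow_def_of_pos hbase, ← Real.exp_add]
  rw [show (1+2*x) * Real.exp (-x) = Real.exp (Real.log (1+2*x) + -x) by
    rw [Real.exp_add, Real.exp_log hb2]]
  rw [Real.exp_le_exp]
  have hmono := gmono x hx (Set.mem_Ici.2 le_rfl) (Set.mem_Ici.2 hβ1) hβ1
  simp only [one_mul, one_pow, div_one] at hmono
  have hlogpos : 0 ≤ Real.log (1+2*x) := Real.log_nonneg (by linarith)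
  have heq : 2/β*x = 2*x/β := by ring
  rw [heq]
  have hα' : α = β^2/2 := by linarith
  rw [hα']
  linarith [hmono]
end

section
/- Let h_n be the polynomials defined by h_0 = 1, h_1(x) = x, and x h_n(x) = h_{n+1}(x) + (n/2) h_{n-1}(x) (monic Hermite), and let ℓ_n^α be defined by ℓ_0^α = 1 and x ℓ_n^α(x) = ℓ_{n+1}^α(x) + (2n+α+1) ℓ_n^α(x) + n(n+α) ℓ_{n-1}^α(x) (monic Laguerre). Then for every n and every real x, lim_{α→∞} (2α)^{-n/2} ℓ_n^α((2α)^{1/2} x + α) = h_n(x). -/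
open Filter Real

private lemma aux10 (S L0 L1 L2 x a c : ℝ) (hS : 0 < S) (hS2 : S^2 = 2*a)
    (hrec : L2 = (S*x + a)*L1 - (2*c + a + 1)*L1 - c*(c+a)*L0) (n : ℕ) :
    S⁻¹^(n+2) * L2 = (x - (2*c+1)*S⁻¹) * (S⁻¹^(n+1) * L1)
      - (c*c*(2*a)⁻¹ + c/2) * (S⁻¹^n * L0) := by
  have hSne : S ≠ 0 := hS.ne'
  have ha : a = S^2/2 := by linarith
  subst hrec ha
  rw [pow_succ, pow_succ]
  field_simp
  ring

theorem stmt10 (h : ℕ → ℝ → ℝ) (l : ℝ → ℕ → ℝ → ℝ)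
    (hh0 : ∀ x : ℝ, h 0 x = 1)
    (hh1 : ∀ x : ℝ, h 1 x = x)
    (hhrec : ∀ n : ℕ, 1 ≤ n → ∀ x : ℝ,
      x * h n x = h (n + 1) x + ((n : ℝ) / 2) * h (n - 1) x)
    (hl0 : ∀ (α : ℝ) (x : ℝ), l α 0 x = 1)
    (hlrec0 : ∀ (α : ℝ) (x : ℝ), x * l α 0 x = l α 1 x + (α + 1) * l α 0 x)
    (hlrec : ∀ (α : ℝ) (n : ℕ), 1 ≤ n → ∀ x : ℝ,
      x * l α n x = l α (n + 1) x + (2 * n + α + 1) * l α n x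
        + (n : ℝ) * ((n : ℝ) + α) * l α (n - 1) x) :
    ∀ (n : ℕ) (x : ℝ),
      Tendsto (fun α : ℝ => (2 * α) ^ (-(n : ℝ) / 2) * l α n (Real.sqrt (2 * α) * x + α))
        atTop (nhds (h n x)) := by
  -- key rpow rewriting lemma
  have hkey : ∀ (k : ℕ) (α : ℝ), 0 < α →
      (2*α) ^ (-(k:ℝ)/2) = (Real.sqrt (2*α))⁻¹ ^ k := by
    intro k α hα
    have h2 : (0:ℝ) ≤ 2*α := by linarith
    rw [Real.sqrt_eq_rpow, ← Real.rpow_neg_one ((2*α) ^ ((1:ℝ)/2)),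
      ← Real.rpow_natCast (((2*α) ^ ((1:ℝ)/2)) ^ (-1:ℝ)) k, ← Real.rpow_mul h2 ((1:ℝ)/2),
      ← Real.rpow_mul h2]
    congr 1
    ring
  -- limits of the scaling factors
  have h2atTop : Tendsto (fun α : ℝ => 2*α) atTop atTop :=
    tendsto_id.const_mul_atTop two_pos
  have tends_sinv : Tendsto (fun α : ℝ => (Real.sqrt (2*α))⁻¹) atTop (nhds 0) := by
    have hs : Tendsto Real.sqrt atTop atTop := by
      have := tendsto_rpow_atTop (by norm_num : (0:ℝ) < 1/2)
      exact this.congr fun x => (Real.sqrt_eq_rpow x).symm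
    exact (hs.comp h2atTop).inv_tendsto_atTop
  have tends_inv2 : Tendsto (fun α : ℝ => (2*α)⁻¹) atTop (nhds 0) :=
    h2atTop.inv_tendsto_atTop
  intro n x
  induction n using Nat.twoStepInduction with
  | zero =>
    rw [hh0]
    exact tendsto_const_nhds.congr fun α => by rw [hl0]; norm_num
  | one =>
    rw [hh1]
    have hl1 : ∀ α y : ℝ, l α 1 y = y - (α+1) := by
      intro α y
      have := hlrec0 α y
      rw [hl0] at this
      linarith
    have hlim : Tendsto (fun α : ℝ => x - (Real.sqrt (2*α))⁻¹) atTop (nhds x) := by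
      simpa using tendsto_const_nhds.sub tends_sinv
    refine hlim.congr' ?_
    filter_upwards [eventually_gt_atTop (0:ℝ)] with α hα
    have hSpos : 0 < Real.sqrt (2*α) := Real.sqrt_pos.2 (by linarith)
    have hSne := hSpos.ne'
    rw [hl1, hkey 1 α hα, pow_one]
    field_simp
    ring
  | more n IH1 IH2 =>
    set c : ℝ := (n:ℝ) + 1 with hc
    -- target value via the Hermite recurrence
    have hgoalh : h (n+2) x = x * h (n+1) x - (c/2) * h n x := by
      have := hhrec (n+1) (Nat.le_add_left 1 n) x
      rw [Nat.add_sub_cancel] at this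
      push_cast at this
      rw [hc]
      linarith
    -- limit of the model function
    have t1 : Tendsto (fun α : ℝ => x - (2*c+1) * (Real.sqrt (2*α))⁻¹) atTop (nhds x) := by
      have := tendsto_const_nhds (x := x) (f := atTop (α := ℝ)) |>.sub
        (tends_sinv.const_mul (2*c+1))
      simpa using this
    have t2 : Tendsto (fun α : ℝ => c*c*(2*α)⁻¹ + c/2) atTop (nhds (c/2)) := by
      have := (tends_inv2.const_mul (c*c)).add (tendsto_const_nhds (x := c/2))
      simpa using this
    have hlim := (t1.mul IH2).sub (t2.mul IH1)
    rw [hgoalh]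
    refine Tendsto.congr' ?_ hlim
    filter_upwards [eventually_gt_atTop (0:ℝ)] with α hα
    have h2α : (0:ℝ) < 2*α := by linarith
    have hSpos : 0 < Real.sqrt (2*α) := Real.sqrt_pos.2 h2α
    have hS2 : (Real.sqrt (2*α))^2 = 2*α := Real.sq_sqrt h2α.le
    set y : ℝ := Real.sqrt (2*α) * x + α with hy
    have hrec := hlrec α (n+1) (Nat.le_add_left 1 n) y
    rw [Nat.add_sub_cancel] at hrec
    have hL2 : l α (n+2) y = (Real.sqrt (2*α)*x + α) * l α (n+1) y
        - (2*c + α + 1) * l α (n+1) y - c*(c+α) * l α n y := by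
      rw [hc]; push_cast at hrec ⊢; rw [← hy]; linarith
    rw [hkey (n+1) α hα, hkey n α hα, hkey (n+2) α hα]
    exact (aux10 (Real.sqrt (2*α)) (l α n y) (l α (n+1) y) (l α (n+2) y) x α c
      hSpos hS2 hL2 n).symm
end

section
/- For monic continuous dual Hahn polynomials s_n(x;a,b,c), defined by the recurrence x s_n(x) = s_{n+1}(x) + (A_n + C_n − a²) s_n(x) + A_{n-1} C_n s_{n-1}(x) with A_n = (n+a+b)(n+a+c) and C_n = n(n+b+c−1), and monic Laguerre polynomials ℓ_n^α defined by x ℓ_n^α(x) = ℓ_{n+1}^α(x) + (2n+α+1) ℓ_n^α(x) + n(n+α) ℓ_{n-1}^α(x), one has for all real a, b with a+b > 0, all n, and all real x: lim_{c→∞} c^{-n} s_n(c x; a, b, c) = ℓ_n^{a+b−1}(x). -/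
open Filter

private lemma lin_div (p q : ℝ) :
    Tendsto (fun c : ℝ => (p + q * c) / c) atTop (nhds q) := by
  have h0 : Tendsto (fun c : ℝ => p / c) atTop (nhds 0) :=
    Tendsto.div_atTop tendsto_const_nhds tendsto_id
  have h1 : Tendsto (fun c : ℝ => p / c + q) atTop (nhds (0 + q)) :=
    h0.add tendsto_const_nhds
  rw [zero_add] at h1
  refine h1.congr' ?_
  filter_upwards [eventually_ne_atTop (0:ℝ)] with c hc
  field_simp

private lemma div_step (n : ℕ) (a b x c u v w : ℝ) (hc : c ≠ 0)
    (hs2 : w = c*x*u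
      - (((n:ℝ)+1+a+b)*((n:ℝ)+1+a+c) + ((n:ℝ)+1)*((n:ℝ)+1+b+c-1) - a^2) * u
      - (((((n:ℝ)+1)-1+a+b)*(((n:ℝ)+1)-1+a+c)) * (((n:ℝ)+1)*(((n:ℝ)+1)+b+c-1))) * v) :
    x * (u / c^(n+1))
      - ((((n:ℝ)+1+a+b)*((n:ℝ)+1+a+c) + ((n:ℝ)+1)*((n:ℝ)+1+b+c-1) - a^2)/c) * (u/c^(n+1))
      - (((((n:ℝ)+1)-1+a+b)*(((n:ℝ)+1)-1+a+c)) * (((n:ℝ)+1)*(((n:ℝ)+1)+b+c-1)) / c^2) * (v/c^n)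
      = w / c^(n+1+1) := by
  rw [hs2]
  field_simp
  ring

theorem stmt18 (a b : ℝ) (hab : 0 < a + b)
    (s : ℝ → ℕ → ℝ → ℝ) (l : ℝ → ℕ → ℝ → ℝ)
    (hs0 : ∀ (c : ℝ) (x : ℝ), s c 0 x = 1)
    (hsrec0 : ∀ (c : ℝ) (x : ℝ),
      x * s c 0 x = s c 1 x + ((a + b) * (a + c) - a ^ 2) * s c 0 x)
    (hsrec : ∀ (c : ℝ) (n : ℕ), 1 ≤ n → ∀ x : ℝ,
      x * s c n x = s c (n + 1) x
        + (((n : ℝ) + a + b) * ((n : ℝ) + a + c) + (n : ℝ) * ((n : ℝ) + b + c - 1) - a ^ 2)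
            * s c n x
        + (((n : ℝ) - 1 + a + b) * ((n : ℝ) - 1 + a + c)) * ((n : ℝ) * ((n : ℝ) + b + c - 1))
            * s c (n - 1) x)
    (hl0 : ∀ (α : ℝ) (x : ℝ), l α 0 x = 1)
    (hlrec0 : ∀ (α : ℝ) (x : ℝ), x * l α 0 x = l α 1 x + (α + 1) * l α 0 x)
    (hlrec : ∀ (α : ℝ) (n : ℕ), 1 ≤ n → ∀ x : ℝ,
      x * l α n x = l α (n + 1) x + (2 * n + α + 1) * l α n x
        + (n : ℝ) * ((n : ℝ) + α) * l α (n - 1) x) :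
    ∀ (n : ℕ) (x : ℝ),
      Tendsto (fun c : ℝ => s c n (c * x) / c ^ n) atTop
        (nhds (l (a + b - 1) n x)) := by
  suffices key : ∀ n : ℕ,
      (∀ x : ℝ, Tendsto (fun c : ℝ => s c n (c * x) / c ^ n) atTop
        (nhds (l (a + b - 1) n x))) ∧
      (∀ x : ℝ, Tendsto (fun c : ℝ => s c (n+1) (c * x) / c ^ (n+1)) atTop
        (nhds (l (a + b - 1) (n+1) x))) by
    intro n x; exact (key n).1 x
  intro n
  induction n with
  | zero =>
    constructor
    · intro x
      have h0 : l (a+b-1) 0 x = 1 := hl0 _ x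
      simp only [pow_zero, h0]
      simpa [hs0] using (tendsto_const_nhds : Tendsto (fun _ : ℝ => (1:ℝ)) atTop (nhds 1))
    · intro x
      have hl1 : l (a+b-1) 1 x = x - (a + b) := by
        have h := hlrec0 (a+b-1) x
        rw [hl0] at h; linarith
      have hcoef : Tendsto (fun c : ℝ => ((a+b)*(a+c) - a^2)/c) atTop (nhds (a+b)) := by
        have h := lin_div ((a+b)*a - a^2) (a+b)
        exact h.congr fun c => by ring
      have hmain : Tendsto (fun c : ℝ => x - ((a+b)*(a+c) - a^2)/c) atTop
          (nhds (x - (a+b))) := tendsto_const_nhds.sub hcoef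
      simp only [zero_add, hl1]
      refine hmain.congr' ?_
      filter_upwards [eventually_ne_atTop (0:ℝ)] with c hc
      have h := hsrec0 c (c*x)
      rw [hs0] at h
      have hs1 : s c 1 (c*x) = c*x - ((a+b)*(a+c) - a^2) := by linarith
      rw [pow_one, hs1]
      field_simp
  | succ n ih =>
    refine ⟨ih.2, ?_⟩
    intro x
    have P1 := ih.2 x
    have P0 := ih.1 x
    have hB : Tendsto (fun c : ℝ =>
        (((n:ℝ)+1+a+b)*((n:ℝ)+1+a+c) + ((n:ℝ)+1)*((n:ℝ)+1+b+c-1) - a^2)/c) atTop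
        (nhds (2*((n:ℝ)+1)+a+b)) := by
      have h := lin_div (((n:ℝ)+1+a+b)*((n:ℝ)+1+a) + ((n:ℝ)+1)*((n:ℝ)+1+b-1) - a^2)
        (2*((n:ℝ)+1)+a+b)
      exact h.congr fun c => by ring
    have hD : Tendsto (fun c : ℝ =>
        ((((n:ℝ)+1)-1+a+b)*(((n:ℝ)+1)-1+a+c)) * (((n:ℝ)+1)*(((n:ℝ)+1)+b+c-1)) / c^2) atTop
        (nhds ((((n:ℝ)+1)-1+a+b)*((n:ℝ)+1))) := by
      have h1 := lin_div (((n:ℝ)+1)-1+a) 1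
      have h2 := lin_div (((n:ℝ)+1)+b-1) 1
      have h3 : Tendsto (fun c : ℝ =>
          ((((n:ℝ)+1)-1+a+b) * ((((n:ℝ)+1)-1+a+1*c)/c)) *
          (((n:ℝ)+1) * ((((n:ℝ)+1)+b-1+1*c)/c))) atTop
          (nhds (((((n:ℝ)+1)-1+a+b) * 1) * (((n:ℝ)+1) * 1))) :=
        (tendsto_const_nhds.mul h1).mul (tendsto_const_nhds.mul h2)
      rw [mul_one, mul_one] at h3
      exact h3.congr fun c => by ring
    have hmain : Tendsto (fun c : ℝ =>
        x * (s c (n+1) (c*x) / c^(n+1))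
        - ((((n:ℝ)+1+a+b)*((n:ℝ)+1+a+c) + ((n:ℝ)+1)*((n:ℝ)+1+b+c-1) - a^2)/c)
            * (s c (n+1) (c*x) / c^(n+1))
        - (((((n:ℝ)+1)-1+a+b)*(((n:ℝ)+1)-1+a+c)) * (((n:ℝ)+1)*(((n:ℝ)+1)+b+c-1)) / c^2)
            * (s c n (c*x) / c^n)) atTop
        (nhds (x * l (a+b-1) (n+1) x - (2*((n:ℝ)+1)+a+b) * l (a+b-1) (n+1) x
          - ((((n:ℝ)+1)-1+a+b)*((n:ℝ)+1)) * l (a+b-1) n x)) :=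
      ((tendsto_const_nhds.mul P1).sub (hB.mul P1)).sub (hD.mul P0)
    have hval : x * l (a+b-1) (n+1) x - (2*((n:ℝ)+1)+a+b) * l (a+b-1) (n+1) x
          - ((((n:ℝ)+1)-1+a+b)*((n:ℝ)+1)) * l (a+b-1) n x = l (a+b-1) (n+1+1) x := by
      have h := hlrec (a+b-1) (n+1) (by omega) x
      simp only [Nat.add_sub_cancel] at h
      push_cast at h
      linear_combination h
    rw [hval] at hmain
    refine hmain.congr' ?_
    filter_upwards [eventually_ne_atTop (0:ℝ)] with c hc
    have h := hsrec c (n+1) (by omega) (c*x)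
    simp only [Nat.add_sub_cancel] at h
    push_cast at h
    have hs2 : s c (n+1+1) (c*x) = c*x * s c (n+1) (c*x)
        - (((n:ℝ)+1+a+b)*((n:ℝ)+1+a+c) + ((n:ℝ)+1)*((n:ℝ)+1+b+c-1) - a^2) * s c (n+1) (c*x)
        - (((((n:ℝ)+1)-1+a+b)*(((n:ℝ)+1)-1+a+c)) * (((n:ℝ)+1)*(((n:ℝ)+1)+b+c-1)))
            * s c n (c*x) := by
      linear_combination -h
    exact div_step n a b x c (s c (n+1) (c*x)) (s c n (c*x)) (s c (n+1+1) (c*x)) hc hs2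
end

section
/- The map (s₁,s₂,s₃,s₄) ↦ (t₁,t₂,t₃,t₄) given by t₁ = s₁s₂/(1+s₁), t₂ = s₂s₃s₄, t₃ = (1+s₁)/(s₂(1+s₁+s₁s₂²s₄)), t₄ = s₂/s₃ is a bijection from {(s₁,s₂,s₃,s₄) : s₁ ≥ 0, s₂ > 0, s₃ > 0, s₄ ≥ 0, s₂²s₄ < 1} onto {(t₁,t₂,t₃,t₄) : t₁ ≥ 0, t₂ ≥ 0, t₃ > 0, t₄ > 0, t₁t₃(1+t₂t₄) < 1, t₂t₄ < 1}, with inverse s₁ = t₁t₃/(1−t₁t₃−t₁t₂t₃t₄), s₂ = (1−t₁t₂t₃t₄)/t₃, s₃ = (1−t₁t₂t₃t₄)/(t₃t₄), s₄ = t₂t₃²t₄/(1−t₁t₂t₃t₄)². -/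
/-- The domain in the `s`-coordinates. -/
def Sset : Set (ℝ × ℝ × ℝ × ℝ) :=
  {s | 0 ≤ s.1 ∧ 0 < s.2.1 ∧ 0 < s.2.2.1 ∧ 0 ≤ s.2.2.2 ∧ s.2.1 ^ 2 * s.2.2.2 < 1}

/-- The codomain in the `t`-coordinates. -/
def Tset : Set (ℝ × ℝ × ℝ × ℝ) :=
  {t | 0 ≤ t.1 ∧ 0 ≤ t.2.1 ∧ 0 < t.2.2.1 ∧ 0 < t.2.2.2 ∧
    t.1 * t.2.2.1 * (1 + t.2.1 * t.2.2.2) < 1 ∧ t.2.1 * t.2.2.2 < 1}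

/-- The coordinate change `s ↦ t`. -/
noncomputable def sToT (s : ℝ × ℝ × ℝ × ℝ) : ℝ × ℝ × ℝ × ℝ :=
  ⟨s.1 * s.2.1 / (1 + s.1),
   s.2.1 * s.2.2.1 * s.2.2.2,
   (1 + s.1) / (s.2.1 * (1 + s.1 + s.1 * s.2.1 ^ 2 * s.2.2.2)),
   s.2.1 / s.2.2.1⟩

/-- The coordinate change `t ↦ s`. -/
noncomputable def tToS (t : ℝ × ℝ × ℝ × ℝ) : ℝ × ℝ × ℝ × ℝ :=
  ⟨t.1 * t.2.2.1 / (1 - t.1 * t.2.2.1 - t.1 * t.2.1 * t.2.2.1 * t.2.2.2),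
   (1 - t.1 * t.2.1 * t.2.2.1 * t.2.2.2) / t.2.2.1,
   (1 - t.1 * t.2.1 * t.2.2.1 * t.2.2.2) / (t.2.2.1 * t.2.2.2),
   t.2.1 * t.2.2.1 ^ 2 * t.2.2.2 / (1 - t.1 * t.2.1 * t.2.2.1 * t.2.2.2) ^ 2⟩

theorem stmt19 :
    (∀ s ∈ Sset, sToT s ∈ Tset) ∧
    (∀ t ∈ Tset, tToS t ∈ Sset) ∧
    (∀ s ∈ Sset, tToS (sToT s) = s) ∧
    (∀ t ∈ Tset, sToT (tToS t) = t) := by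
  refine ⟨?_, ?_, ?_, ?_⟩
  · rintro ⟨a, b, c, d⟩ ⟨ha, hb, hc, hd, h⟩
    have hE : (0:ℝ) < 1 + a + a * b ^ 2 * d := by positivity
    have h1a : (0:ℝ) < 1 + a := by positivity
    simp only [Set.mem_setOf_eq, sToT] at *
    refine ⟨by positivity, by positivity, by positivity, by positivity, ?_, ?_⟩
    · show a * b / (1 + a) * ((1 + a) / (b * (1 + a + a * b ^ 2 * d))) *
        (1 + b * c * d * (b / c)) < 1
      have key : a * b / (1 + a) * ((1 + a) / (b * (1 + a + a * b ^ 2 * d))) *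
          (1 + b * c * d * (b / c)) = a * (1 + b ^ 2 * d) / (1 + a + a * b ^ 2 * d) := by
        field_simp
      rw [key, div_lt_one hE]
      nlinarith [mul_nonneg ha (mul_nonneg (sq_nonneg b) hd)]
    · show b * c * d * (b / c) < 1
      have : b * c * d * (b / c) = b ^ 2 * d := by field_simp
      rw [this]; exact h
  · rintro ⟨p, q, r, u⟩ ⟨hp, hq, hr, hu, h1, h2⟩
    simp only [Set.mem_setOf_eq, tToS] at *
    have hF : (0:ℝ) < 1 - p * r - p * q * r * u := by nlinarith
    have hD : (0:ℝ) < 1 - p * q * r * u := by nlinarith [mul_nonneg hp hr.le]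
    refine ⟨div_nonneg (by positivity) hF.le, by positivity, by positivity, by positivity, ?_⟩
    have : ((1 - p * q * r * u) / r) ^ 2 * (q * r ^ 2 * u / (1 - p * q * r * u) ^ 2)
        = q * u := by
      field_simp
    rw [this]; exact h2
  · rintro ⟨a, b, c, d⟩ ⟨ha, hb, hc, hd, h⟩
    simp only [Set.mem_setOf_eq] at *
    have hE : (0:ℝ) < 1 + a + a * b ^ 2 * d := by positivity
    have h1a : (0:ℝ) < 1 + a := by positivity
    have hK2 : 1 - a * b / (1 + a) * (b * c * d) *
        ((1 + a) / (b * (1 + a + a * b ^ 2 * d))) * (b / c)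
        = (1 + a) / (1 + a + a * b ^ 2 * d) := by
      field_simp
      ring
    have hK1 : 1 - a * b / (1 + a) * ((1 + a) / (b * (1 + a + a * b ^ 2 * d)))
        - a * b / (1 + a) * (b * c * d) *
        ((1 + a) / (b * (1 + a + a * b ^ 2 * d))) * (b / c)
        = 1 / (1 + a + a * b ^ 2 * d) := by
      field_simp
      ring
    simp only [sToT, tToS]
    rw [hK1, hK2]
    refine Prod.ext ?_ (Prod.ext ?_ (Prod.ext ?_ ?_)) <;> simp only []
    · field_simp
    · field_simp
    · field_simp
    · field_simp
  · rintro ⟨p, q, r, u⟩ ⟨hp, hq, hr, hu, h1, h2⟩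
    simp only [Set.mem_setOf_eq] at *
    have hF : (0:ℝ) < 1 - p * r - p * q * r * u := by nlinarith
    have hD : (0:ℝ) < 1 - p * q * r * u := by nlinarith [mul_nonneg hp hr.le]
    have hK1 : 1 + p * r / (1 - p * r - p * q * r * u)
        = (1 - p * q * r * u) / (1 - p * r - p * q * r * u) := by
      rw [eq_div_iff hF.ne', add_mul, div_mul_cancel₀ _ hF.ne']
      ring
    have hK2 : 1 + p * r / (1 - p * r - p * q * r * u)
        + p * r / (1 - p * r - p * q * r * u) * ((1 - p * q * r * u) / r) ^ 2 *
          (q * r ^ 2 * u / (1 - p * q * r * u) ^ 2)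
        = 1 / (1 - p * r - p * q * r * u) := by
      have hF' := hF.ne'
      have hD' := hD.ne'
      have hr' := hr.ne'
      have hF2 : 1 - p * r - p * r * q * u ≠ 0 := (by linarith : (0:ℝ) < 1 - p * r - p * r * q * u).ne'
      have hD2 : 1 - p * r * q * u ≠ 0 := (by linarith : (0:ℝ) < 1 - p * r * q * u).ne'
      field_simp
      ring
    simp only [sToT, tToS]
    rw [hK2, hK1]
    refine Prod.ext ?_ (Prod.ext ?_ (Prod.ext ?_ ?_)) <;> simp only []
    · have hF' := hF.ne'
      have hD' := hD.ne'
      field_simp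
      have hF2 : 1 - p * r - p * r * q * u ≠ 0 := (by linarith : (0:ℝ) < 1 - p * r - p * r * q * u).ne'
      have hD2 : 1 - p * r * q * u ≠ 0 := (by linarith : (0:ℝ) < 1 - p * r * q * u).ne'
      rw [div_eq_iff (mul_ne_zero hF2 hD2)]
      ring
    · field_simp
    · field_simp
    · field_simp
end
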